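/- arXiv:2509.09023 — 5 statements merged into one kernel-verified Lean document; each statement's English description precedes it below -/
import Mathlib

section
/- Let A, B₀ be n×n symmetric positive definite matrices and B₁ an invertible matrix with B₁ + B₁ᵀ − A symmetric positive definite. Define the composite solver B by B⁻¹ = B̄₁⁻¹ + (I − B₁⁻ᵀA) B₀⁻¹ (I − A B₁⁻¹), where B̄₁ = B₁ (B₁ + B₁ᵀ − A)⁻¹ B₁ᵀ. Then B⁻¹ is symmetric positive definite. -/
open Matrix

lemma posdef_conj_aux {n : ℕ} {M C : Matrix (Fin n) (Fin n) ℝ}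
    (hM : M.PosDef) (hC : IsUnit C.det) : (Cᴴ * M * C).PosDef := by
  refine PosDef.of_dotProduct_mulVec_pos (isHermitian_conjTranspose_mul_mul C hM.1) fun x hx => ?_
  have hinj : Function.Injective (C.mulVec) := mulVec_injective_iff_isUnit.2 ((isUnit_iff_isUnit_det C).2 hC)
  have hCx : C *ᵥ x ≠ 0 := fun h => hx (hinj (by simpa using h))
  simpa only [star_mulVec, dotProduct_mulVec, vecMul_vecMul] using hM.dotProduct_mulVec_pos hCx

theorem composite_inverse_posdef {n : ℕ} (A B₀ B₁ : Matrix (Fin n) (Fin n) ℝ)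
    (hA : A.PosDef) (hB₀ : B₀.PosDef) (hB₁ : IsUnit B₁.det)
    (hX : (B₁ + B₁ᵀ - A).PosDef) :
    ((B₁ * (B₁ + B₁ᵀ - A)⁻¹ * B₁ᵀ)⁻¹
      + (1 - (B₁ᵀ)⁻¹ * A) * B₀⁻¹ * (1 - A * B₁⁻¹)).PosDef := by
  have hCT : ∀ (M : Matrix (Fin n) (Fin n) ℝ), Mᴴ = Mᵀ := fun M => rfl
  have h1 : (B₁ * (B₁ + B₁ᵀ - A)⁻¹ * B₁ᵀ).PosDef := by
    have : ((B₁ᵀ)ᴴ * (B₁ + B₁ᵀ - A)⁻¹ * B₁ᵀ).PosDef :=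
      posdef_conj_aux hX.inv (by simpa [Matrix.det_transpose] using hB₁)
    simpa [hCT, transpose_transpose] using this
  have h2 : ((1 - (B₁ᵀ)⁻¹ * A) * B₀⁻¹ * (1 - A * B₁⁻¹)).PosSemidef := by
    have key : (1 - A * B₁⁻¹)ᴴ = 1 - (B₁ᵀ)⁻¹ * A := by
      rw [hCT]
      rw [transpose_sub, transpose_one, transpose_mul, transpose_nonsing_inv,
        show Aᵀ = A from hA.1]
    have := hB₀.inv.posSemidef.conjTranspose_mul_mul_same (1 - A * B₁⁻¹)
    rwa [key] at this
  exact (h1.inv).add_posSemidef h2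
end

section
/- With A s.p.d., B₀ s.p.d., and B₁ invertible with B₁ + B₁ᵀ − A s.p.d., the composite solver B defined by B⁻¹ = B̄₁⁻¹ + (I − B₁⁻ᵀA) B₀⁻¹ (I − A B₁⁻¹) satisfies vᵀ B⁻¹ v ≥ vᵀ B̄₁⁻¹ v for all v, and consequently vᵀ B v ≤ vᵀ B̄₁ v for all v, so that the operator norm satisfies ‖B‖ ≤ ‖B̄₁‖. -/
open Matrix

noncomputable def spec {n : ℕ} (M : Matrix (Fin n) (Fin n) ℝ) : ℝ :=
  ‖Matrix.toEuclideanCLM (𝕜 := ℝ) M‖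

namespace CompositeAux

variable {n : ℕ}

local notation "⟪" x ", " y "⟫" => inner (𝕜 := ℝ) x y

lemma inner_toCLM (M : Matrix (Fin n) (Fin n) ℝ) (x : EuclideanSpace ℝ (Fin n)) :
    ⟪x, Matrix.toEuclideanCLM (𝕜 := ℝ) M x⟫
      = (WithLp.equiv 2 _ x) ⬝ᵥ (M *ᵥ (WithLp.equiv 2 _ x)) := by
  rw [EuclideanSpace.inner_eq_star_dotProduct, ofLp_toEuclideanCLM, dotProduct_comm]
  simp [Matrix.toLin'_apply]

lemma posDef_mul_mul_conjTranspose {M P : Matrix (Fin n) (Fin n) ℝ}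
    (hM : M.PosDef) (hP : IsUnit P) : (P * M * Pᴴ).PosDef := by
  refine posDef_iff_dotProduct_mulVec.mpr ⟨isHermitian_mul_mul_conjTranspose P hM.1, fun x hx => ?_⟩
  have hPH : IsUnit (Pᴴ) := by
    rw [Matrix.conjTranspose_eq_transpose_of_trivial, Matrix.isUnit_iff_isUnit_det,
      Matrix.det_transpose, ← Matrix.isUnit_iff_isUnit_det]
    exact hP
  have hx' : Pᴴ *ᵥ x ≠ 0 := by
    have hinj := Matrix.mulVec_injective_iff_isUnit.mpr hPH
    intro h
    exact hx (hinj (by simpa using h))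
  have := hM.dotProduct_mulVec_pos hx'
  have hrw : P * M * Pᴴ = (Pᴴ)ᴴ * M * Pᴴ := by rw [conjTranspose_conjTranspose]
  rw [hrw]
  simpa only [star_mulVec, dotProduct_mulVec, vecMul_vecMul] using this

/-- quadratic form bounded by spec times norm squared -/
lemma quad_le_spec (M : Matrix (Fin n) (Fin n) ℝ) (v : Fin n → ℝ) :
    v ⬝ᵥ (M *ᵥ v) ≤ spec M * (v ⬝ᵥ v) := by
  set T := Matrix.toEuclideanCLM (𝕜 := ℝ) M with hT
  set x : EuclideanSpace ℝ (Fin n) := (WithLp.equiv 2 _).symm v with hx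
  have h1 : v ⬝ᵥ (M *ᵥ v) = ⟪x, T x⟫ := by
    rw [inner_toCLM]; simp [hx]
  have h2 : v ⬝ᵥ v = ‖x‖ * ‖x‖ := by
    have : ⟪x, x⟫ = ‖x‖ * ‖x‖ := real_inner_self_eq_norm_mul_norm x
    rw [← this, EuclideanSpace.inner_eq_star_dotProduct]; simp [hx]
  have h3 : ⟪x, T x⟫ ≤ ‖x‖ * ‖T x‖ := real_inner_le_norm x (T x)
  have h4 : ‖T x‖ ≤ ‖T‖ * ‖x‖ := T.le_opNorm x
  have h5 : (0:ℝ) ≤ ‖x‖ := norm_nonneg x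
  rw [h1, h2]
  calc ⟪x, T x⟫ ≤ ‖x‖ * ‖T x‖ := h3
    _ ≤ ‖x‖ * (‖T‖ * ‖x‖) := by nlinarith
    _ = ‖T‖ * (‖x‖ * ‖x‖) := by ring
  -- spec M = ‖T‖ by rfl

lemma spec_le_of_quad {M : Matrix (Fin n) (Fin n) ℝ} (hM : M.PosSemidef)
    {c : ℝ} (hc : 0 ≤ c) (h : ∀ v : Fin n → ℝ, v ⬝ᵥ (M *ᵥ v) ≤ c * (v ⬝ᵥ v)) :
    spec M ≤ c := by
  set T := Matrix.toEuclideanCLM (𝕜 := ℝ) M with hT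
  have hsa : _root_.IsSelfAdjoint T := by
    have hM' : _root_.IsSelfAdjoint M := hM.isHermitian
    exact hM'.map (Matrix.toEuclideanCLM (𝕜 := ℝ) (n := Fin n))
  have hsym : ∀ x y : EuclideanSpace ℝ (Fin n), ⟪T x, y⟫ = ⟪x, T y⟫ := fun x y =>
    (ContinuousLinearMap.isSelfAdjoint_iff_isSymmetric.mp hsa) x y
  have hnonneg : ∀ x : EuclideanSpace ℝ (Fin n), 0 ≤ ⟪x, T x⟫ := by
    intro x
    rw [inner_toCLM]
    simpa using hM.dotProduct_mulVec_nonneg (WithLp.equiv 2 _ x)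
  have hbound : ∀ x : EuclideanSpace ℝ (Fin n), ⟪x, T x⟫ ≤ c * (‖x‖ * ‖x‖) := by
    intro x
    have := h (WithLp.equiv 2 _ x)
    rw [inner_toCLM]
    have h2 : (WithLp.equiv 2 _ x) ⬝ᵥ (WithLp.equiv 2 _ x) = ‖x‖ * ‖x‖ := by
      rw [← real_inner_self_eq_norm_mul_norm x, EuclideanSpace.inner_eq_star_dotProduct]
      simp
    rw [h2] at this
    exact this
  -- Cauchy–Schwarz for the bilinear form (u, w) ↦ ⟪u, T w⟫
  have key : ∀ u w : EuclideanSpace ℝ (Fin n),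
      ⟪u, T w⟫ * ⟪u, T w⟫ ≤ ⟪u, T u⟫ * ⟪w, T w⟫ := by
    intro u w
    have hquad : ∀ t : ℝ,
        0 ≤ ⟪w, T w⟫ * (t * t) + (2 * ⟪u, T w⟫) * t + ⟪u, T u⟫ := by
      intro t
      have h0 := hnonneg (u + t • w)
      have hwu : ⟪w, T u⟫ = ⟪u, T w⟫ := by rw [← hsym w u, real_inner_comm]
      have hexp : ⟪u + t • w, T (u + t • w)⟫
          = ⟪w, T w⟫ * (t * t) + (2 * ⟪u, T w⟫) * t + ⟪u, T u⟫ := by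
        rw [T.map_add, T.map_smul]
        simp only [inner_add_left, inner_add_right, real_inner_smul_left,
          real_inner_smul_right, hwu, smul_eq_mul]
        ring
      rw [hexp] at h0
      exact h0
    have := discrim_le_zero hquad
    rw [discrim] at this
    nlinarith [this]
  -- ‖T x‖² ≤ c ‖T‖ ‖x‖²
  have hTx : ∀ x : EuclideanSpace ℝ (Fin n), ‖T x‖ * ‖T x‖ ≤ (c * ‖T‖) * (‖x‖ * ‖x‖) := by
    intro x
    have h1 : ⟪x, T (T x)⟫ = ‖T x‖ * ‖T x‖ := by
      rw [← hsym x (T x)]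
      exact real_inner_self_eq_norm_mul_norm _
    have h2 := key x (T x)
    rw [h1] at h2
    have h3 : ⟪T x, T (T x)⟫ ≤ ‖T‖ * (‖T x‖ * ‖T x‖) := by
      calc ⟪T x, T (T x)⟫ ≤ ‖T x‖ * ‖T (T x)‖ := real_inner_le_norm _ _
        _ ≤ ‖T x‖ * (‖T‖ * ‖T x‖) :=
          mul_le_mul_of_nonneg_left (T.le_opNorm (T x)) (norm_nonneg _)
        _ = ‖T‖ * (‖T x‖ * ‖T x‖) := by ring
    have h4 := hbound x
    have h5 := hnonneg x
    have h6 := hnonneg (T x)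
    have h7 : (0:ℝ) ≤ ‖T x‖ := norm_nonneg _
    have h8 : (0:ℝ) ≤ ‖x‖ := norm_nonneg _
    have h9 : (0:ℝ) ≤ ‖T‖ := norm_nonneg _
    have hp := mul_le_mul h4 h3 h6 (by positivity : (0:ℝ) ≤ c * (‖x‖ * ‖x‖))
    have hmain : (‖T x‖ * ‖T x‖) * (‖T x‖ * ‖T x‖)
        ≤ (c * ‖T‖ * (‖x‖ * ‖x‖)) * (‖T x‖ * ‖T x‖) := by nlinarith [hp, h2]
    by_cases h0 : ‖T x‖ = 0
    · rw [h0]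
      have hK : (0:ℝ) ≤ c * ‖T‖ * (‖x‖ * ‖x‖) := by positivity
      linarith
    · have hpos : 0 < ‖T x‖ * ‖T x‖ := by
        have : 0 < ‖T x‖ := lt_of_le_of_ne h7 (Ne.symm h0)
        positivity
      exact le_of_mul_le_mul_right hmain hpos
  have hTle : ‖T‖ ≤ Real.sqrt (c * ‖T‖) := by
    apply T.opNorm_le_bound (Real.sqrt_nonneg _)
    intro x
    have := hTx x
    have h1 : ‖T x‖ = Real.sqrt (‖T x‖ * ‖T x‖) := (Real.sqrt_mul_self (norm_nonneg _)).symm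
    rw [h1]
    have h2 : Real.sqrt ((c * ‖T‖) * (‖x‖ * ‖x‖)) = Real.sqrt (c * ‖T‖) * ‖x‖ := by
      rw [Real.sqrt_mul (by positivity), Real.sqrt_mul_self (norm_nonneg _)]
    rw [← h2]
    exact Real.sqrt_le_sqrt this
  have h9 : (0:ℝ) ≤ ‖T‖ := norm_nonneg _
  have hsq : ‖T‖ * ‖T‖ ≤ c * ‖T‖ := by
    have := mul_le_mul hTle hTle h9 (Real.sqrt_nonneg _)
    rwa [Real.mul_self_sqrt (by positivity)] at this
  have hspec : spec M = ‖T‖ := rfl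
  rw [hspec]
  by_cases h0 : ‖T‖ = 0
  · rw [h0]; exact hc
  · have hpos : 0 < ‖T‖ := lt_of_le_of_ne h9 (Ne.symm h0)
    exact le_of_mul_le_mul_right hsq hpos

end CompositeAux

open CompositeAux

theorem composite_norm_le_symmetrized {n : ℕ} (A B₀ B₁ : Matrix (Fin n) (Fin n) ℝ)
    (hA : A.PosDef) (hB₀ : B₀.PosDef) (hB₁ : IsUnit B₁.det)
    (hX : (B₁ + B₁ᵀ - A).PosDef)
    (Bbar : Matrix (Fin n) (Fin n) ℝ) (hBbar : Bbar = B₁ * (B₁ + B₁ᵀ - A)⁻¹ * B₁ᵀ)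
    (Binv : Matrix (Fin n) (Fin n) ℝ)
    (hBinv : Binv = Bbar⁻¹ + (1 - (B₁ᵀ)⁻¹ * A) * B₀⁻¹ * (1 - A * B₁⁻¹))
    (B : Matrix (Fin n) (Fin n) ℝ) (hB : B = Binv⁻¹) :
    (∀ v : Fin n → ℝ, v ⬝ᵥ (Bbar⁻¹ *ᵥ v) ≤ v ⬝ᵥ (Binv *ᵥ v)) ∧
    (∀ v : Fin n → ℝ, v ⬝ᵥ (B *ᵥ v) ≤ v ⬝ᵥ (Bbar *ᵥ v)) ∧
    spec B ≤ spec Bbar := by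
  have hAt : Aᵀ = A := by
    rw [← Matrix.conjTranspose_eq_transpose_of_trivial]; exact hA.1
  have hB₁u : IsUnit B₁ := (Matrix.isUnit_iff_isUnit_det _).2 hB₁
  have hBbarPD : Bbar.PosDef := by
    rw [hBbar, ← Matrix.conjTranspose_eq_transpose_of_trivial B₁]
    exact posDef_mul_mul_conjTranspose hX.inv hB₁u
  have hterm : ((1 - (B₁ᵀ)⁻¹ * A) * B₀⁻¹ * (1 - A * B₁⁻¹)).PosSemidef := by
    have h1 : (1 - (B₁ᵀ)⁻¹ * A) = (1 - A * B₁⁻¹)ᴴ := by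
      rw [Matrix.conjTranspose_eq_transpose_of_trivial, Matrix.transpose_sub,
        Matrix.transpose_one, Matrix.transpose_mul, Matrix.transpose_nonsing_inv, hAt]
    rw [h1]
    exact (hB₀.inv.posSemidef).conjTranspose_mul_mul_same _
  have ineq1 : ∀ v : Fin n → ℝ, v ⬝ᵥ (Bbar⁻¹ *ᵥ v) ≤ v ⬝ᵥ (Binv *ᵥ v) := by
    intro v
    have h0 : 0 ≤ v ⬝ᵥ (((1 - (B₁ᵀ)⁻¹ * A) * B₀⁻¹ * (1 - A * B₁⁻¹)) *ᵥ v) := by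
      simpa using hterm.dotProduct_mulVec_nonneg v
    rw [hBinv, Matrix.add_mulVec, dotProduct_add]
    linarith
  have hBinvPD : Binv.PosDef := by
    rw [hBinv]
    exact hBbarPD.inv.add_posSemidef hterm
  have hBPD : B.PosDef := hB ▸ hBinvPD.inv
  have hBbarDet : IsUnit Bbar.det := hBbarPD.det_pos.ne'.isUnit
  have hBinvDet : IsUnit Binv.det := hBinvPD.det_pos.ne'.isUnit
  have hBbarT : Bbarᵀ = Bbar := by
    rw [← Matrix.conjTranspose_eq_transpose_of_trivial]; exact hBbarPD.1
  have ineq2 : ∀ v : Fin n → ℝ, v ⬝ᵥ (B *ᵥ v) ≤ v ⬝ᵥ (Bbar *ᵥ v) := by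
    intro v
    set w : Fin n → ℝ := B *ᵥ v with hw
    have hvw : Binv *ᵥ w = v := by
      rw [hw, hB, Matrix.mulVec_mulVec, Matrix.mul_nonsing_inv _ hBinvDet, Matrix.one_mulVec]
    -- step A: w ⬝ᵥ Bbar⁻¹ w ≤ w ⬝ᵥ v
    have hA1 : w ⬝ᵥ (Bbar⁻¹ *ᵥ w) ≤ w ⬝ᵥ v := by
      have := ineq1 w
      rwa [hvw] at this
    -- step B: 2 (v ⬝ᵥ w) ≤ w ⬝ᵥ Bbar⁻¹ w + v ⬝ᵥ Bbar v
    have hBinvBbar : Bbar⁻¹ *ᵥ (Bbar *ᵥ v) = v := by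
      rw [Matrix.mulVec_mulVec, Matrix.nonsing_inv_mul _ hBbarDet, Matrix.one_mulVec]
    have hBbarBinv : ∀ z : Fin n → ℝ, (Bbar *ᵥ v) ⬝ᵥ (Bbar⁻¹ *ᵥ z)
        = v ⬝ᵥ (Bbar *ᵥ (Bbar⁻¹ *ᵥ z)) := by
      intro z
      rw [dotProduct_comm, dotProduct_mulVec (Bbar⁻¹ *ᵥ z), ← Matrix.mulVec_transpose, hBbarT,
        dotProduct_comm]
    have hBB : ∀ z : Fin n → ℝ, Bbar *ᵥ (Bbar⁻¹ *ᵥ z) = z := by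
      intro z
      rw [Matrix.mulVec_mulVec, Matrix.mul_nonsing_inv _ hBbarDet, Matrix.one_mulVec]
    have h0 : 0 ≤ (w - Bbar *ᵥ v) ⬝ᵥ (Bbar⁻¹ *ᵥ (w - Bbar *ᵥ v)) := by
      simpa using hBbarPD.inv.posSemidef.dotProduct_mulVec_nonneg (w - Bbar *ᵥ v)
    have hexp : (w - Bbar *ᵥ v) ⬝ᵥ (Bbar⁻¹ *ᵥ (w - Bbar *ᵥ v))
        = w ⬝ᵥ (Bbar⁻¹ *ᵥ w) - w ⬝ᵥ v - v ⬝ᵥ w + v ⬝ᵥ (Bbar *ᵥ v) := by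
      rw [Matrix.mulVec_sub, sub_dotProduct, dotProduct_sub, dotProduct_sub,
        hBinvBbar, hBbarBinv w, hBB w, dotProduct_comm (Bbar *ᵥ v) v]
      ring
    rw [hexp] at h0
    have hcomm : v ⬝ᵥ w = w ⬝ᵥ v := dotProduct_comm v w
    -- v ⬝ᵥ (B *ᵥ v) = v ⬝ᵥ w
    have hgoal : v ⬝ᵥ (B *ᵥ v) = v ⬝ᵥ w := by rw [hw]
    rw [hgoal]
    linarith
  refine ⟨ineq1, ineq2, ?_⟩
  have hq : ∀ v : Fin n → ℝ, v ⬝ᵥ (B *ᵥ v) ≤ spec Bbar * (v ⬝ᵥ v) := fun v =>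
    (ineq2 v).trans (quad_le_spec Bbar v)
  exact spec_le_of_quad hBPD.posSemidef (norm_nonneg _) hq
end

section
/- Let A and B be n×n symmetric positive definite matrices with vᵀAv ≤ vᵀBv for all v and ‖B‖ ≤ c₀‖A‖ for some constant c₀ ≥ 1 (spectral norms). Suppose w is a vector satisfying ‖(I − B⁻¹A)w‖²_A ≥ (1 − δ)‖w‖²_A for some δ ∈ (0,1). Then ‖Aw‖² ≤ c₀ ‖A‖ δ ‖w‖²_A. -/
open Matrix

lemma quad_le_spec {n : ℕ} (M : Matrix (Fin n) (Fin n) ℝ) (x : Fin n → ℝ) :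
    x ⬝ᵥ (M *ᵥ x) ≤ spec M * (x ⬝ᵥ x) := by
  set x' : EuclideanSpace ℝ (Fin n) := (WithLp.equiv 2 _).symm x with hx'
  have h1 : x ⬝ᵥ (M *ᵥ x) = inner ℝ x' (Matrix.toEuclideanCLM (𝕜 := ℝ) M x') := by
    simp [hx', PiLp.inner_apply, Matrix.toEuclideanCLM_toLp,
      Matrix.toLin'_apply, dotProduct, mul_comm]
  have h2 : x ⬝ᵥ x = ‖x'‖ ^ 2 := by
    rw [← real_inner_self_eq_norm_sq]
    rw [hx', PiLp.inner_apply]; simp [dotProduct, sq]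
  rw [h1, h2]
  calc inner ℝ x' (Matrix.toEuclideanCLM (𝕜 := ℝ) M x')
      ≤ ‖x'‖ * ‖Matrix.toEuclideanCLM (𝕜 := ℝ) M x'‖ := real_inner_le_norm _ _
    _ ≤ ‖x'‖ * (‖Matrix.toEuclideanCLM (𝕜 := ℝ) M‖ * ‖x'‖) := by
        gcongr; exact (Matrix.toEuclideanCLM (𝕜 := ℝ) M).le_opNorm x'
    _ = spec M * ‖x'‖ ^ 2 := by rw [spec]; ring

theorem near_null_characterization {n : ℕ} (A B : Matrix (Fin n) (Fin n) ℝ)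
    (hA : A.PosDef) (hB : B.PosDef)
    (hAB : ∀ v : Fin n → ℝ, v ⬝ᵥ (A *ᵥ v) ≤ v ⬝ᵥ (B *ᵥ v))
    (c₀ : ℝ) (hc₀ : 1 ≤ c₀) (hnorm : spec B ≤ c₀ * spec A)
    (δ : ℝ) (hδ : δ ∈ Set.Ioo (0 : ℝ) 1)
    (w : Fin n → ℝ)
    (hstall : (1 - δ) * (w ⬝ᵥ (A *ᵥ w)) ≤
      ((1 - B⁻¹ * A) *ᵥ w) ⬝ᵥ (A *ᵥ ((1 - B⁻¹ * A) *ᵥ w))) :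
    (A *ᵥ w) ⬝ᵥ (A *ᵥ w) ≤ c₀ * spec A * δ * (w ⬝ᵥ (A *ᵥ w)) := by
  obtain ⟨hδ0, hδ1⟩ := hδ
  -- symmetry facts
  have hAsym : ∀ x y : Fin n → ℝ, x ⬝ᵥ (A *ᵥ y) = y ⬝ᵥ (A *ᵥ x) := by
    intro x y
    rw [dotProduct_mulVec, ← mulVec_transpose]
    rw [show Aᵀ = A from by rw [← Matrix.conjTranspose_eq_transpose_of_trivial]; exact hA.1.eq]
    exact dotProduct_comm _ _
  have hBsym : ∀ x y : Fin n → ℝ, x ⬝ᵥ (B *ᵥ y) = y ⬝ᵥ (B *ᵥ x) := by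
    intro x y
    rw [dotProduct_mulVec, ← mulVec_transpose]
    rw [show Bᵀ = B from by rw [← Matrix.conjTranspose_eq_transpose_of_trivial]; exact hB.1.eq]
    exact dotProduct_comm _ _
  have hBinv : B * B⁻¹ = 1 := mul_nonsing_inv _ (isUnit_iff_ne_zero.mpr hB.det_pos.ne')
  have hBinv' : B⁻¹ * B = 1 := nonsing_inv_mul _ (isUnit_iff_ne_zero.mpr hB.det_pos.ne')
  set v : Fin n → ℝ := A *ᵥ w with hv
  set u : Fin n → ℝ := B⁻¹ *ᵥ v with hu
  have hBu : B *ᵥ u = v := by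
    rw [hu, mulVec_mulVec, hBinv, one_mulVec]
  -- nonnegativity facts
  have hApos : (0 : ℝ) ≤ w ⬝ᵥ (A *ᵥ w) := by simpa using hA.posSemidef.dotProduct_mulVec_nonneg w
  have hSpecA : (0 : ℝ) ≤ spec A := norm_nonneg _
  have hSpecB : (0 : ℝ) ≤ spec B := norm_nonneg _
  -- Step 1: expand the stall hypothesis; deduce  v ⬝ᵥ u ≤ δ * wᵀAw
  have hexp : ((1 - B⁻¹ * A) *ᵥ w) = w - u := by
    rw [sub_mulVec, one_mulVec, hu, hv, ← mulVec_mulVec]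
  have hAu_le : u ⬝ᵥ (A *ᵥ u) ≤ u ⬝ᵥ v := by
    calc u ⬝ᵥ (A *ᵥ u) ≤ u ⬝ᵥ (B *ᵥ u) := hAB u
      _ = u ⬝ᵥ v := by rw [hBu]
  have hkey : v ⬝ᵥ u ≤ δ * (w ⬝ᵥ (A *ᵥ w)) := by
    have hexp2 : ((1 - B⁻¹ * A) *ᵥ w) ⬝ᵥ (A *ᵥ ((1 - B⁻¹ * A) *ᵥ w)) =
        w ⬝ᵥ (A *ᵥ w) - 2 * (u ⬝ᵥ v) + u ⬝ᵥ (A *ᵥ u) := by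
      rw [hexp, sub_dotProduct, mulVec_sub, dotProduct_sub, dotProduct_sub,
        hAsym w u]
      have : u ⬝ᵥ (A *ᵥ w) = u ⬝ᵥ v := by rw [hv]
      rw [this]; ring
    have h1 : (1 - δ) * (w ⬝ᵥ (A *ᵥ w)) ≤
        w ⬝ᵥ (A *ᵥ w) - 2 * (u ⬝ᵥ v) + u ⬝ᵥ v := by
      calc (1 - δ) * (w ⬝ᵥ (A *ᵥ w)) ≤ _ := hstall
        _ = w ⬝ᵥ (A *ᵥ w) - 2 * (u ⬝ᵥ v) + u ⬝ᵥ (A *ᵥ u) := hexp2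
        _ ≤ _ := by linarith [hAu_le]
    have : v ⬝ᵥ u = u ⬝ᵥ v := dotProduct_comm _ _
    nlinarith [h1]
  -- Step 2: Cauchy–Schwarz in the B-inner product: (v ⬝ᵥ v)^2 ≤ (v ⬝ᵥ u) * (v ⬝ᵥ (B *ᵥ v))
  have hCS : (v ⬝ᵥ v) ^ 2 ≤ (v ⬝ᵥ u) * (v ⬝ᵥ (B *ᵥ v)) := by
    have hquad : ∀ t : ℝ, 0 ≤ (v ⬝ᵥ (B *ᵥ v)) * (t * t) +
        (2 * (u ⬝ᵥ (B *ᵥ v))) * t + (u ⬝ᵥ (B *ᵥ u)) := by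
      intro t
      have h0 : (0:ℝ) ≤ (u + t • v) ⬝ᵥ (B *ᵥ (u + t • v)) := by
        simpa using hB.posSemidef.dotProduct_mulVec_nonneg (u + t • v)
      have hexp3 : (u + t • v) ⬝ᵥ (B *ᵥ (u + t • v)) =
          (v ⬝ᵥ (B *ᵥ v)) * (t * t) + (2 * (u ⬝ᵥ (B *ᵥ v))) * t + (u ⬝ᵥ (B *ᵥ u)) := by
        simp only [mulVec_add, mulVec_smul, add_dotProduct, smul_dotProduct,
          dotProduct_add, dotProduct_smul, smul_eq_mul]
        rw [hBsym v u]; ring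
      linarith [hexp3 ▸ h0]
    have hd := discrim_le_zero hquad
    rw [discrim] at hd
    have h1 : u ⬝ᵥ (B *ᵥ v) = v ⬝ᵥ v := by
      rw [hBsym u v, hBu]
    have h2 : u ⬝ᵥ (B *ᵥ u) = v ⬝ᵥ u := by rw [hBu]; exact dotProduct_comm _ _
    rw [h1, h2] at hd
    nlinarith [hd]
  -- Step 3: combine
  have hBv : v ⬝ᵥ (B *ᵥ v) ≤ spec B * (v ⬝ᵥ v) := quad_le_spec B v
  have hvv : (0:ℝ) ≤ v ⬝ᵥ v :=
    Finset.sum_nonneg fun i _ => mul_self_nonneg (v i)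
  have hvu : (0:ℝ) ≤ v ⬝ᵥ u := by
    rw [hu]
    have := (hB.inv).posSemidef.dotProduct_mulVec_nonneg v
    simpa using this
  rcases eq_or_lt_of_le hvv with h0 | h0
  · have hrhs : 0 ≤ c₀ * spec A * δ * (w ⬝ᵥ (A *ᵥ w)) := by positivity
    rw [← h0] at *
    linarith
  · -- v ⬝ᵥ v ≤ spec B * (v ⬝ᵥ u)
    have hstep : v ⬝ᵥ v ≤ spec B * (v ⬝ᵥ u) := by
      have : (v ⬝ᵥ v) ^ 2 ≤ (v ⬝ᵥ u) * (spec B * (v ⬝ᵥ v)) := by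
        calc (v ⬝ᵥ v) ^ 2 ≤ (v ⬝ᵥ u) * (v ⬝ᵥ (B *ᵥ v)) := hCS
          _ ≤ (v ⬝ᵥ u) * (spec B * (v ⬝ᵥ v)) := by
              apply mul_le_mul_of_nonneg_left hBv hvu
      nlinarith [this]
    calc v ⬝ᵥ v ≤ spec B * (v ⬝ᵥ u) := hstep
      _ ≤ spec B * (δ * (w ⬝ᵥ (A *ᵥ w))) := by
          apply mul_le_mul_of_nonneg_left _ hSpecB
          rwa [hv]
      _ ≤ (c₀ * spec A) * (δ * (w ⬝ᵥ (A *ᵥ w))) := by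
          apply mul_le_mul_of_nonneg_right hnorm
          positivity
      _ = c₀ * spec A * δ * (w ⬝ᵥ (A *ᵥ w)) := by ring
end

section
/- Let A, B₀, B₁ be n×n symmetric positive definite matrices with A ≼ B₀ and A ≼ B₁ (Loewner order). Then the composite solver B defined by I − B⁻¹A = (I − B₁⁻¹A)(I − B₀⁻¹A)(I − B₁⁻¹A) satisfies A ≼ B, and moreover ‖B‖ ≤ ‖B₁‖. -/
open Matrix
open scoped RealInnerProductSpace

section Helpers

variable {n : ℕ}


/-- Inverse is antitone on positive definite matrices. -/
lemma inv_psd_sub {A B : Matrix (Fin n) (Fin n) ℝ} (hA : A.PosDef) (hB : B.PosDef)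
    (h : (B - A).PosSemidef) : (A⁻¹ - B⁻¹).PosSemidef := by
  have hAd : IsUnit A.det := isUnit_iff_ne_zero.mpr hA.det_pos.ne'
  have hBd : IsUnit B.det := isUnit_iff_ne_zero.mpr hB.det_pos.ne'
  have key : A⁻¹ - B⁻¹
      = (A⁻¹ - B⁻¹)ᴴ * A * (A⁻¹ - B⁻¹) + (B⁻¹)ᴴ * (B - A) * B⁻¹ := by
    rw [conjTranspose_sub, hA.1.inv.eq, hB.1.inv.eq]
    simp only [Matrix.sub_mul, Matrix.mul_sub, Matrix.mul_assoc,
      Matrix.nonsing_inv_mul_cancel_left _ _ hAd,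
      Matrix.nonsing_inv_mul_cancel_left _ _ hBd,
      Matrix.mul_nonsing_inv _ hAd, Matrix.mul_nonsing_inv _ hBd,
      Matrix.mul_one, Matrix.one_mul]
    abel
  rw [key]
  exact (hA.posSemidef.conjTranspose_mul_mul_same _).add
    (h.conjTranspose_mul_mul_same _)

lemma inner_toEuclideanCLM (M : Matrix (Fin n) (Fin n) ℝ) (hM : M.PosSemidef)
    (x : EuclideanSpace ℝ (Fin n)) :
    0 ≤ ⟪(Matrix.toEuclideanCLM (𝕜 := ℝ) M) x, x⟫ := by
  have hx := hM.dotProduct_mulVec_nonneg ((WithLp.equiv 2 _) x)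
  have e : ⟪(Matrix.toEuclideanCLM (𝕜 := ℝ) M) x, x⟫
      = dotProduct (star ((WithLp.equiv 2 _) x)) (M *ᵥ ((WithLp.equiv 2 _) x)) := by
    rw [real_inner_comm, EuclideanSpace.inner_eq_star_dotProduct]
    simp [Matrix.ofLp_toEuclideanCLM, Matrix.toLin'_apply, dotProduct_comm]
  rw [e]; exact hx

lemma selfadj_toEuclideanCLM (M : Matrix (Fin n) (Fin n) ℝ) (hM : M.IsHermitian) :
    _root_.IsSelfAdjoint (Matrix.toEuclideanCLM (𝕜 := ℝ) M) := by
  have hsM : star M = M := by rw [Matrix.star_eq_conjTranspose, hM.eq]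
  show star (Matrix.toEuclideanCLM (𝕜 := ℝ) M) = Matrix.toEuclideanCLM (𝕜 := ℝ) M
  rw [← map_star, hsM]

lemma spec_mono {P Q : Matrix (Fin n) (Fin n) ℝ} (hP : P.PosSemidef)
    (h : (Q - P).PosSemidef) : spec P ≤ spec Q := by
  set T := Matrix.toEuclideanCLM (𝕜 := ℝ) P with hTdef
  set S := Matrix.toEuclideanCLM (𝕜 := ℝ) Q with hSdef
  have hTpos : ∀ x, 0 ≤ ⟪T x, x⟫ := inner_toEuclideanCLM P hP
  have hSTpos : ∀ x, ⟪T x, x⟫ ≤ ⟪S x, x⟫ := by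
    intro x
    have h0 := inner_toEuclideanCLM (Q - P) h x
    rw [map_sub] at h0
    simp only [ContinuousLinearMap.sub_apply, inner_sub_left] at h0
    linarith
  have hTsa : ∀ x y, ⟪T x, y⟫ = ⟪x, T y⟫ :=
    (selfadj_toEuclideanCLM P hP.1).isSymmetric
  -- Cauchy–Schwarz for the semi-inner-product induced by T
  have hCS : ∀ x y, ⟪T x, y⟫ ^ 2 ≤ ⟪T x, x⟫ * ⟪T y, y⟫ := by
    intro x y
    have hq : ∀ t : ℝ, 0 ≤ ⟪T y, y⟫ * (t * t) + (2 * ⟪T x, y⟫) * t + ⟪T x, x⟫ := by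
      intro t
      have h0 := hTpos (x + t • y)
      have expand : ⟪T (x + t • y), x + t • y⟫
          = ⟪T y, y⟫ * (t * t) + (2 * ⟪T x, y⟫) * t + ⟪T x, x⟫ := by
        have hyx : ⟪T y, x⟫ = ⟪T x, y⟫ := by
          rw [hTsa y x, real_inner_comm]
        simp only [map_add, ContinuousLinearMap.map_smul, inner_add_left, inner_add_right,
          real_inner_smul_left, real_inner_smul_right, hyx]
        ring
      rw [expand] at h0; exact h0
    have hd := discrim_le_zero hq
    rw [discrim] at hd
    nlinarith [hd]
  have hTx : ∀ x, ‖T x‖ ^ 2 * ‖T x‖ ^ 2 ≤ ⟪T x, x⟫ * (‖T‖ * ‖T x‖ ^ 2) := by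
    intro x
    have h1 := hCS x (T x)
    have h2 : ⟪T (T x), T x⟫ ≤ ‖T‖ * ‖T x‖ ^ 2 := by
      calc ⟪T (T x), T x⟫ ≤ ‖T (T x)‖ * ‖T x‖ := real_inner_le_norm _ _
        _ ≤ (‖T‖ * ‖T x‖) * ‖T x‖ := by
            have := T.le_opNorm (T x)
            exact mul_le_mul_of_nonneg_right this (norm_nonneg _)
        _ = ‖T‖ * ‖T x‖ ^ 2 := by ring
    have h3 : ⟪T x, T x⟫ = ‖T x‖ ^ 2 := real_inner_self_eq_norm_sq _
    nlinarith [hTpos x]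
  have hinner : ∀ x, ⟪T x, x⟫ ≤ ‖S‖ * ‖x‖ ^ 2 := by
    intro x
    calc ⟪T x, x⟫ ≤ ⟪S x, x⟫ := hSTpos x
      _ ≤ ‖S x‖ * ‖x‖ := real_inner_le_norm _ _
      _ ≤ (‖S‖ * ‖x‖) * ‖x‖ :=
          mul_le_mul_of_nonneg_right (S.le_opNorm x) (norm_nonneg _)
      _ = ‖S‖ * ‖x‖ ^ 2 := by ring
  have key : ∀ x, ‖T x‖ ^ 2 ≤ ‖T‖ * ‖S‖ * ‖x‖ ^ 2 := by
    intro x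
    rcases eq_or_ne ‖T x‖ 0 with h0 | h0
    · have hTS : (0:ℝ) ≤ ‖T‖ * ‖S‖ * ‖x‖ ^ 2 :=
        mul_nonneg (mul_nonneg (norm_nonneg _) (norm_nonneg _)) (sq_nonneg _)
      rw [h0]
      calc (0:ℝ) ^ 2 = 0 := by norm_num
        _ ≤ _ := hTS
    · have hpos' : 0 < ‖T x‖ ^ 2 := pow_pos ((norm_nonneg _).lt_of_ne (Ne.symm h0)) 2
      have h5 := hTx x
      have h6 := hinner x
      have h7 : 0 ≤ ‖T‖ * ‖T x‖ ^ 2 := mul_nonneg (norm_nonneg _) (sq_nonneg _)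
      nlinarith [hTpos x]
  have hTnorm : ‖T‖ * ‖T‖ ≤ ‖T‖ * ‖S‖ := by
    have hK : (0:ℝ) ≤ ‖T‖ * ‖S‖ := mul_nonneg (norm_nonneg _) (norm_nonneg _)
    have hb : ‖T‖ ≤ Real.sqrt (‖T‖ * ‖S‖) := by
      refine ContinuousLinearMap.opNorm_le_bound T (Real.sqrt_nonneg _) fun x => ?_
      calc ‖T x‖ = Real.sqrt (‖T x‖ ^ 2) := (Real.sqrt_sq (norm_nonneg _)).symm
        _ ≤ Real.sqrt (‖T‖ * ‖S‖ * ‖x‖ ^ 2) := Real.sqrt_le_sqrt (key x)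
        _ = Real.sqrt (‖T‖ * ‖S‖) * ‖x‖ := by
            rw [Real.sqrt_mul hK, Real.sqrt_sq (norm_nonneg x)]
    nlinarith [Real.sq_sqrt hK, Real.sqrt_nonneg (‖T‖ * ‖S‖), norm_nonneg T]
  rcases (norm_nonneg T).eq_or_lt with h0 | h0
  · show ‖T‖ ≤ ‖S‖
    rw [← h0]; exact norm_nonneg S
  · exact le_of_mul_le_mul_left hTnorm h0


end Helpers

theorem composite_dominates_A_and_norm_bound {n : ℕ}
    (A B₀ B₁ B : Matrix (Fin n) (Fin n) ℝ)
    (hA : A.PosDef) (hB₀ : B₀.PosDef) (hB₁ : B₁.PosDef)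
    (h₀ : (B₀ - A).PosSemidef) (h₁ : (B₁ - A).PosSemidef)
    (hBdet : IsUnit B.det)
    (hcomp : 1 - B⁻¹ * A = (1 - B₁⁻¹ * A) * (1 - B₀⁻¹ * A) * (1 - B₁⁻¹ * A)) :
    (B - A).PosSemidef ∧ spec B ≤ spec B₁ := by
  have hAd : IsUnit A.det := isUnit_iff_ne_zero.mpr hA.det_pos.ne'
  have hB₀d : IsUnit B₀.det := isUnit_iff_ne_zero.mpr hB₀.det_pos.ne'
  have hB₁d : IsUnit B₁.det := isUnit_iff_ne_zero.mpr hB₁.det_pos.ne'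
  set W : Matrix (Fin n) (Fin n) ℝ := 1 - B₁⁻¹ * A with hW
  set V : Matrix (Fin n) (Fin n) ℝ := 1 - A * B₁⁻¹ with hV
  have hV_W : Vᴴ = W := by
    rw [hV, hW, conjTranspose_sub, conjTranspose_one, conjTranspose_mul,
      hB₁.1.inv.eq, hA.1.eq]
  -- key algebraic consequence of hcomp
  have hBA : B⁻¹ * A = 1 - W * (1 - B₀⁻¹ * A) * W := by
    rw [eq_sub_iff_add_eq, ← hcomp]; abel
  have hBinv : B⁻¹ = (B₁⁻¹ + (B₁⁻¹ - B₁⁻¹ * A * B₁⁻¹)) + W * B₀⁻¹ * V := by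
    have e1 : B⁻¹ = B⁻¹ * A * A⁻¹ := (Matrix.mul_nonsing_inv_cancel_right _ _ hAd).symm
    rw [e1, hBA, hW, hV]
    simp only [Matrix.sub_mul, Matrix.mul_sub, Matrix.mul_one, Matrix.one_mul,
      Matrix.mul_assoc, Matrix.mul_nonsing_inv _ hAd,
      Matrix.mul_nonsing_inv_cancel_left _ _ hAd]
    try abel
  -- auxiliary positivity facts
  have hG2 : (B₁⁻¹ - B₁⁻¹ * A * B₁⁻¹).PosSemidef := by
    have hcong := h₁.conjTranspose_mul_mul_same (B := B₁⁻¹)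
    rw [hB₁.1.inv.eq] at hcong
    have e : B₁⁻¹ * (B₁ - A) * B₁⁻¹ = B₁⁻¹ - B₁⁻¹ * A * B₁⁻¹ := by
      simp only [Matrix.mul_sub, Matrix.sub_mul, Matrix.mul_assoc,
        Matrix.nonsing_inv_mul_cancel_left _ _ hB₁d,
        Matrix.nonsing_inv_mul _ hB₁d, Matrix.one_mul, Matrix.mul_one]
      try abel
    rwa [e] at hcong
  have hWBV : (W * B₀⁻¹ * V).PosSemidef := by
    have hcong := (hB₀.inv.posSemidef).conjTranspose_mul_mul_same (B := V)
    rwa [hV_W] at hcong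
  have hBinv_pd : (B⁻¹).PosDef := by
    rw [hBinv]
    exact (hB₁.inv.add_posSemidef hG2).add_posSemidef hWBV
  have hB_pd : B.PosDef := by
    rw [← Matrix.nonsing_inv_nonsing_inv B hBdet]
    exact hBinv_pd.inv
  -- part 1 : A ≼ B
  have h0i : (A⁻¹ - B₀⁻¹).PosSemidef := inv_psd_sub hA hB₀ h₀
  have hAiBi : (A⁻¹ - B⁻¹).PosSemidef := by
    have e : A⁻¹ - B⁻¹ = W * (A⁻¹ - B₀⁻¹) * V := by
      rw [hBinv, hW, hV]
      simp only [Matrix.sub_mul, Matrix.mul_sub, Matrix.mul_one, Matrix.one_mul,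
        Matrix.mul_assoc, Matrix.mul_nonsing_inv _ hAd,
        Matrix.nonsing_inv_mul_cancel_left _ _ hAd]
      try abel
    rw [e, ← hV_W]
    exact h0i.conjTranspose_mul_mul_same _
  have hBA_psd : (B - A).PosSemidef := by
    have h' := inv_psd_sub hBinv_pd hA.inv hAiBi
    rwa [Matrix.nonsing_inv_nonsing_inv B hBdet, Matrix.nonsing_inv_nonsing_inv A hAd] at h'
  refine ⟨hBA_psd, ?_⟩
  -- part 2 : ‖B‖ ≤ ‖B₁‖
  have hBiB1i : (B⁻¹ - B₁⁻¹).PosSemidef := by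
    have e : B⁻¹ - B₁⁻¹ = (B₁⁻¹ - B₁⁻¹ * A * B₁⁻¹) + W * B₀⁻¹ * V := by
      rw [hBinv]; abel
    rw [e]
    exact hG2.add hWBV
  have hB1B : (B₁ - B).PosSemidef := by
    have h' := inv_psd_sub hB₁.inv hBinv_pd hBiB1i
    rwa [Matrix.nonsing_inv_nonsing_inv B hBdet, Matrix.nonsing_inv_nonsing_inv B₁ hB₁d] at h'
  exact spec_mono hB_pd.posSemidef hB1B
end

section
/- Let B₁ be an n×n symmetric positive definite matrix and A s.p.d. with B₁ ≽ A. Then 2B₁ − A is symmetric positive definite and satisfies ‖(2B₁ − A)⁻¹‖ ≤ ‖B₁⁻¹‖, and the symmetrized solver B̄₁ = B₁(2B₁ − A)⁻¹B₁ satisfies A ≼ B̄₁ ≼ B₁; in particular ‖B̄₁‖ ≤ ‖B₁‖. -/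
set_option maxHeartbeats 1000000

open scoped InnerProductSpace


open Matrix

lemma isPositive_toEuclideanCLM {n : ℕ} {M : Matrix (Fin n) (Fin n) ℝ} (hM : M.PosSemidef) :
    (Matrix.toEuclideanCLM (𝕜 := ℝ) M).IsPositive := by
  constructor
  · rw [← ContinuousLinearMap.isSelfAdjoint_iff_isSymmetric, _root_.isSelfAdjoint_iff, ← map_star]
    congr 1
    rw [Matrix.star_eq_conjTranspose, hM.isHermitian.eq]
  · intro x
    have h := hM.dotProduct_mulVec_nonneg (WithLp.ofLp x)
    rw [ContinuousLinearMap.reApplyInnerSelf]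
    rw [EuclideanSpace.inner_eq_star_dotProduct]
    simp only [ofLp_toEuclideanCLM, toLin'_apply, star_trivial, RCLike.re_to_real]
    simpa using h

lemma spec_mono_s17 {n : ℕ} {M N : Matrix (Fin n) (Fin n) ℝ} (hM : M.PosSemidef)
    (hMN : (N - M).PosSemidef) : spec M ≤ spec N := by
  set T := Matrix.toEuclideanCLM (𝕜 := ℝ) M with hT
  set S := Matrix.toEuclideanCLM (𝕜 := ℝ) N with hS
  have hq : QuasispectrumRestricts M ContinuousMap.realToNNReal := by
    open scoped MatrixOrder in exact QuasispectrumRestricts.nnreal_of_nonneg hM.nonneg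
  obtain ⟨Msq, hMsqH, -, hMsq⟩ :=
    CFC.exists_sqrt_of_isSelfAdjoint_of_quasispectrumRestricts hM.isHermitian hq
  set R := Matrix.toEuclideanCLM (𝕜 := ℝ) Msq with hR
  have hRR : R * R = T := by
    rw [hR, hT]
    have h := _root_.map_mul (Matrix.toEuclideanCLM (𝕜 := ℝ)) Msq Msq
    simp only [hMsq] at h
    exact h.symm
  have hRsa : _root_.IsSelfAdjoint R := by
    rw [_root_.isSelfAdjoint_iff, hR, ← map_star]
    congr 1
  have hnormT : ‖T‖ = ‖R‖ * ‖R‖ := by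
    rw [← hRR]
    nth_rewrite 1 [← hRsa.star_eq]
    exact CStarRing.norm_star_mul_self (x := R)
  have hSpos : (S - T).IsPositive := by
    rw [hS, hT, ← map_sub]; exact isPositive_toEuclideanCLM hMN
  have key : ∀ x : EuclideanSpace ℝ (Fin n), ‖T x‖ ^ 2 ≤ ‖T‖ * ‖S‖ * ‖x‖ ^ 2 := by
    intro x
    have h1 : ‖T x‖ ≤ ‖R‖ * ‖R x‖ := by
      rw [← hRR]; exact R.le_opNorm (R x)
    have h2 : ‖R x‖ ^ 2 = ⟪T x, x⟫_ℝ := by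
      rw [← real_inner_self_eq_norm_sq, ← hRR]
      show ⟪R x, R x⟫_ℝ = ⟪R (R x), x⟫_ℝ
      nth_rewrite 3 [← hRsa.adjoint_eq]
      exact (ContinuousLinearMap.adjoint_inner_left R x (R x)).symm
    have h3 : ⟪T x, x⟫_ℝ ≤ ⟪S x, x⟫_ℝ := by
      have := hSpos.inner_nonneg_left x
      simp only [ContinuousLinearMap.sub_apply, inner_sub_left, RCLike.re_to_real] at this
      linarith
    have h4 : ⟪S x, x⟫_ℝ ≤ ‖S‖ * ‖x‖ ^ 2 := by
      calc ⟪S x, x⟫_ℝ ≤ ‖S x‖ * ‖x‖ := real_inner_le_norm _ _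
        _ ≤ (‖S‖ * ‖x‖) * ‖x‖ := by
            exact mul_le_mul_of_nonneg_right (S.le_opNorm x) (norm_nonneg x)
        _ = ‖S‖ * ‖x‖ ^ 2 := by ring
    have hT0 : (0:ℝ) ≤ ⟪T x, x⟫_ℝ := by rw [← h2]; positivity
    calc ‖T x‖ ^ 2 ≤ (‖R‖ * ‖R x‖) ^ 2 := by
          exact pow_le_pow_left₀ (norm_nonneg _) h1 2
      _ = ‖T‖ * ⟪T x, x⟫_ℝ := by rw [hnormT, ← h2]; ring
      _ ≤ ‖T‖ * (‖S‖ * ‖x‖ ^ 2) := by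
          exact mul_le_mul_of_nonneg_left (h3.trans h4) (norm_nonneg T)
      _ = ‖T‖ * ‖S‖ * ‖x‖ ^ 2 := by ring
  rcases eq_or_lt_of_le (norm_nonneg T) with h0 | h0
  · show ‖T‖ ≤ ‖S‖; rw [← h0]; exact norm_nonneg S
  · have hb : ‖T‖ ≤ Real.sqrt (‖T‖ * ‖S‖) := by
      apply ContinuousLinearMap.opNorm_le_bound _ (Real.sqrt_nonneg _)
      intro x
      have := key x
      have hnn : (0:ℝ) ≤ ‖T‖ * ‖S‖ := by positivity
      rw [← Real.sqrt_sq (norm_nonneg (T x))]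
      calc Real.sqrt (‖T x‖ ^ 2) ≤ Real.sqrt (‖T‖ * ‖S‖ * ‖x‖ ^ 2) := Real.sqrt_le_sqrt this
        _ = Real.sqrt (‖T‖ * ‖S‖) * ‖x‖ := by
            rw [Real.sqrt_mul hnn, Real.sqrt_sq (norm_nonneg x)]
    have hsq : ‖T‖ ^ 2 ≤ ‖T‖ * ‖S‖ := by
      have := Real.sqrt_le_sqrt (le_of_eq (Real.sq_sqrt (by positivity : (0:ℝ) ≤ ‖T‖ * ‖S‖)).symm)
      nlinarith [Real.sq_sqrt (by positivity : (0:ℝ) ≤ ‖T‖ * ‖S‖), Real.sqrt_nonneg (‖T‖ * ‖S‖)]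
    show ‖T‖ ≤ ‖S‖
    nlinarith

theorem symmetrized_solver_bounds {n : ℕ} (A B₁ : Matrix (Fin n) (Fin n) ℝ)
    (hA : A.PosDef) (hB₁ : B₁.PosDef) (hge : (B₁ - A).PosSemidef) :
    ((2 : ℝ) • B₁ - A).PosDef ∧
    spec ((2 : ℝ) • B₁ - A)⁻¹ ≤ spec B₁⁻¹ ∧
    (B₁ * ((2 : ℝ) • B₁ - A)⁻¹ * B₁ - A).PosSemidef ∧
    (B₁ - B₁ * ((2 : ℝ) • B₁ - A)⁻¹ * B₁).PosSemidef ∧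
    spec (B₁ * ((2 : ℝ) • B₁ - A)⁻¹ * B₁) ≤ spec B₁ := by
  set D := B₁ - A with hDdef
  set C := (2 : ℝ) • B₁ - A with hCdef
  have hCeq : C = B₁ + D := by rw [hCdef, hDdef]; module
  have hC : C.PosDef := by rw [hCeq]; exact hB₁.add_posSemidef hge
  have hCi : (C⁻¹).PosDef := hC.inv
  have hBi : (B₁⁻¹).PosDef := hB₁.inv
  have hCc : C * C⁻¹ = 1 := mul_nonsing_inv C hC.det_pos.ne'.isUnit
  have hcC : C⁻¹ * C = 1 := nonsing_inv_mul C hC.det_pos.ne'.isUnit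
  have hBb : B₁ * B₁⁻¹ = 1 := mul_nonsing_inv _ hB₁.det_pos.ne'.isUnit
  have hbB : B₁⁻¹ * B₁ = 1 := nonsing_inv_mul _ hB₁.det_pos.ne'.isUnit
  have e1 : ∀ X : Matrix (Fin n) (Fin n) ℝ, B₁ * (B₁⁻¹ * X) = X := fun X => by
    rw [← Matrix.mul_assoc, hBb, Matrix.one_mul]
  have e2 : ∀ X : Matrix (Fin n) (Fin n) ℝ, B₁⁻¹ * (B₁ * X) = X := fun X => by
    rw [← Matrix.mul_assoc, hbB, Matrix.one_mul]
  have e3 : ∀ X : Matrix (Fin n) (Fin n) ℝ, C * (C⁻¹ * X) = X := fun X => by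
    rw [← Matrix.mul_assoc, hCc, Matrix.one_mul]
  have e4 : ∀ X : Matrix (Fin n) (Fin n) ℝ, C⁻¹ * (C * X) = X := fun X => by
    rw [← Matrix.mul_assoc, hcC, Matrix.one_mul]
  have hD' : D = C - B₁ := by rw [hDdef, hCdef]; module
  have hA' : A = (2 : ℝ) • B₁ - C := by rw [hCdef]; module
  -- hermitian rewrites
  have hDH : Dᴴ = D := hge.isHermitian.eq
  have hBH : B₁ᴴ = B₁ := hB₁.isHermitian.eq
  have hCiH : (C⁻¹)ᴴ = C⁻¹ := hCi.isHermitian.eq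
  -- (e)  B₁⁻¹ - C⁻¹ is PSD
  have hG : (D + D * B₁⁻¹ * D).PosSemidef := by
    have h2 := hBi.posSemidef.mul_mul_conjTranspose_same D
    rw [hDH] at h2
    exact hge.add h2
  have hEeq : B₁⁻¹ - C⁻¹ = C⁻¹ * (D + D * B₁⁻¹ * D) * C⁻¹ := by
    rw [hD']
    simp only [Matrix.mul_add, Matrix.add_mul, Matrix.mul_sub, Matrix.sub_mul,
      Matrix.mul_assoc, e1, e2, e3, e4, hCc, hcC, hBb, hbB, Matrix.mul_one, Matrix.one_mul]
    abel
  have hE : (B₁⁻¹ - C⁻¹).PosSemidef := by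
    have h := hG.mul_mul_conjTranspose_same C⁻¹
    rw [hCiH, ← hEeq] at h
    exact h
  -- fourth part
  have h4eq : B₁ - B₁ * C⁻¹ * B₁ = B₁ * (B₁⁻¹ - C⁻¹) * B₁ := by
    simp only [Matrix.mul_sub, Matrix.sub_mul, Matrix.mul_assoc, e1, e2, Matrix.mul_one,
      Matrix.one_mul, hBb, hbB]
  have h4 : (B₁ - B₁ * C⁻¹ * B₁).PosSemidef := by
    have h := hE.mul_mul_conjTranspose_same B₁
    rw [hBH, ← h4eq] at h
    exact h
  -- third part
  have h3eq : B₁ * C⁻¹ * B₁ - A = D * C⁻¹ * D := by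
    rw [hD', hA']
    simp only [Matrix.mul_sub, Matrix.sub_mul, Matrix.mul_assoc, e3, e4, hCc, hcC,
      Matrix.mul_one, Matrix.one_mul]
    module
  have h3 : (B₁ * C⁻¹ * B₁ - A).PosSemidef := by
    have h := hCi.posSemidef.mul_mul_conjTranspose_same D
    rw [hDH, ← h3eq] at h
    exact h
  -- fifth part
  have hBbar : (B₁ * C⁻¹ * B₁).PosSemidef := by
    have h := hCi.posSemidef.mul_mul_conjTranspose_same B₁
    rw [hBH] at h
    exact h
  exact ⟨hC, spec_mono_s17 hCi.posSemidef hE, h3, h4, spec_mono_s17 hBbar h4⟩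
end
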